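/- Let $U,V$ be vector spaces over an algebraically closed field with $\dim U = r$ and $\dim V = s \geq 1$, and let $W \subseteq \mathrm{Hom}(U,V)$ be a $t$-dimensional subspace such that for every nonzero $u \in U$ the evaluation map $f \mapsto f(u)$ from $W$ to $V$ is surjective. Then for any hyperplane $B \subseteq U$ (with $B \neq 0$), the subspace $\{f \in W : f|_B = 0\}$ has dimension at most $t - r - s + 2$. -/

import Mathlib

open Module Polynomial

universe u

set_option maxHeartbeats 1000000
section TechLemmaAux

namespace TechLemma

/-- Solvability of a bilinear system with a nontrivial "bi-zero". -/
def HasSol {K : Type*} [CommRing K] {m s c : ℕ}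
    (N : Fin c → Matrix (Fin m) (Fin s) K) : Prop :=
  ∃ x : Fin m → K, ∃ y : Fin s → K, x ≠ 0 ∧ y ≠ 0 ∧
    ∀ j, ∑ p, ∑ q, N j p q * x p * y q = 0

/-- Transfer: if the system has a nontrivial solution over a field extension of an
algebraically closed field, then it has one over the base field. -/
lemma transfer {K : Type*} [Field K] [IsAlgClosed K] {F : Type*} [Field F]
    (φ : K →+* F) {m s c : ℕ} (N : Fin c → Matrix (Fin m) (Fin s) K)
    (hF : HasSol (fun j => (N j).map φ)) : HasSol N := by
  classical
  obtain ⟨x, y, hx, hy, hsol⟩ := hF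
  -- variables: inl (inl p) = x_p, inl (inr q) = y_q, inr _ : auxiliary
  set σ := (Fin m ⊕ Fin s) ⊕ (Fin m ⊕ Fin s)
  let P : Fin c → MvPolynomial σ K := fun j =>
    ∑ p, ∑ q, MvPolynomial.C (N j p q) * MvPolynomial.X (.inl (.inl p)) *
      MvPolynomial.X (.inl (.inr q))
  let Q1 : MvPolynomial σ K :=
    (∑ p : Fin m, MvPolynomial.X (.inr (.inl p)) * MvPolynomial.X (.inl (.inl p))) - 1
  let Q2 : MvPolynomial σ K :=
    (∑ q : Fin s, MvPolynomial.X (.inr (.inr q)) * MvPolynomial.X (.inl (.inr q))) - 1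
  let S : Set (MvPolynomial σ K) := Set.range P ∪ {Q1, Q2}
  -- the evaluation over F is zero on S
  obtain ⟨p₀, hp₀⟩ : ∃ p₀, x p₀ ≠ 0 := by
    by_contra h; push_neg at h; exact hx (funext fun p => h p)
  obtain ⟨q₀, hq₀⟩ : ∃ q₀, y q₀ ≠ 0 := by
    by_contra h; push_neg at h; exact hy (funext fun q => h q)
  let v : σ → F := fun i => match i with
    | .inl (.inl p) => x p
    | .inl (.inr q) => y q
    | .inr (.inl p) => if p = p₀ then (x p₀)⁻¹ else 0
    | .inr (.inr q) => if q = q₀ then (y q₀)⁻¹ else 0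
  let ev : MvPolynomial σ K →+* F := (MvPolynomial.eval₂Hom φ v)
  have hevS : ∀ f ∈ S, ev f = 0 := by
    rintro f (⟨j, rfl⟩ | hf)
    · have : ev (P j) = ∑ p, ∑ q, φ (N j p q) * x p * y q := by
        simp [P, ev, v]
      rw [this]
      simpa [Matrix.map_apply] using hsol j
    · rcases hf with rfl | rfl
      · have : ev Q1 = (∑ p : Fin m, (if p = p₀ then (x p₀)⁻¹ else 0) * x p) - 1 := by
          simp [Q1, ev, v]
        rw [this, sub_eq_zero]
        simp only [ite_mul, zero_mul]
        rw [Finset.sum_ite_eq' Finset.univ p₀ (fun p => (x p₀)⁻¹ * x p)]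
        simp [inv_mul_cancel₀ hp₀]
      · have : ev Q2 = (∑ q : Fin s, (if q = q₀ then (y q₀)⁻¹ else 0) * y q) - 1 := by
          simp [Q2, ev, v]
        rw [this, sub_eq_zero]
        simp only [ite_mul, zero_mul]
        rw [Finset.sum_ite_eq' Finset.univ q₀ (fun q => (y q₀)⁻¹ * y q)]
        simp [inv_mul_cancel₀ hq₀]
  -- the ideal spanned by S is proper
  have hne : Ideal.span S ≠ ⊤ := by
    intro h
    have h1 : (1 : MvPolynomial σ K) ∈ Ideal.span S := h ▸ Submodule.mem_top
    have : Ideal.span S ≤ RingHom.ker ev := Ideal.span_le.mpr (fun f hf => hevS f hf)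
    have := this h1
    rw [RingHom.mem_ker, map_one] at this
    exact one_ne_zero this
  obtain ⟨M, hM, hSM⟩ := Ideal.exists_le_maximal _ hne
  obtain ⟨z, hz⟩ := (MvPolynomial.isMaximal_iff_eq_vanishingIdeal_singleton (I := M)).mp hM
  have hzS : ∀ f ∈ S, MvPolynomial.eval z f = 0 := by
    intro f hf
    have : f ∈ M := hSM (Ideal.subset_span hf)
    rw [hz] at this
    exact (MvPolynomial.mem_vanishingIdeal_singleton_iff z f).mp this
  refine ⟨fun p => z (.inl (.inl p)), fun q => z (.inl (.inr q)), ?_, ?_, ?_⟩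
  · intro h
    have h1 := hzS Q1 (Or.inr (Or.inl rfl))
    have : ∀ p, z (.inl (.inl p)) = 0 := fun p => congrFun h p
    simp [Q1, this] at h1
  · intro h
    have h2 := hzS Q2 (Or.inr (Or.inr rfl))
    have : ∀ q, z (.inl (.inr q)) = 0 := fun q => congrFun h q
    simp [Q2, this] at h2
  · intro j
    have := hzS (P j) (Or.inl ⟨j, rfl⟩)
    simpa [P] using this


/-- An element of a field extension that is algebraic over an algebraically closed
subfield lies in (the range of) that subfield. -/
lemma mem_range_of_algebraic {K F : Type*} [Field K] [IsAlgClosed K] [Field F]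
    (φ : K →+* F) (u : F) (p : K[X]) (hp : p ≠ 0) (hpu : Polynomial.eval₂ φ u p = 0) :
    ∃ a : K, φ a = u := by
  have hsplit : p.Splits := IsAlgClosed.splits p
  have hfac := hsplit.eq_prod_roots
  have key : Polynomial.eval₂ φ u p =
      φ p.leadingCoeff * (p.roots.map (fun a => u - φ a)).prod := by
    conv_lhs => rw [hfac]
    rw [Polynomial.eval₂_mul, Polynomial.eval₂_C, Polynomial.eval₂_multiset_prod,
      Multiset.map_map]
    congr 2
    apply Multiset.map_congr rfl
    intro a _
    simp
  rw [key] at hpu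
  have hlc : φ p.leadingCoeff ≠ 0 :=
    (map_ne_zero_iff φ φ.injective).mpr (Polynomial.leadingCoeff_ne_zero.mpr hp)
  have hz : (0 : F) ∈ p.roots.map (fun a => u - φ a) := by
    apply Multiset.prod_eq_zero_iff.mp
    rcases mul_eq_zero.mp hpu with h | h
    · exact absurd h hlc
    · exact h
  obtain ⟨a, _, h0⟩ := Multiset.mem_map.mp hz
  exact ⟨a, (sub_eq_zero.mp h0).symm⟩


/-- For `u` transcendental over (the image of) `K`, there is a valuation subring of `F`
containing `K` in which `u` is a nonunit (a place centered at "u = 0"). -/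
lemma exists_place {K F : Type*} [Field K] [Field F]
    (φ : K →+* F) (u : F) (hu : ∀ p : K[X], p ≠ 0 → Polynomial.eval₂ φ u p ≠ 0) :
    ∃ O : ValuationSubring F, (∀ a : K, φ a ∈ O.toSubring) ∧
      ∃ h : u ∈ O.toSubring, ¬ IsUnit (⟨u, h⟩ : O.toSubring) := by
  classical
  have hXprime : (Ideal.span ({X} : Set K[X])).IsPrime :=
    (Ideal.span_singleton_prime Polynomial.X_ne_zero).mpr Polynomial.prime_X
  letI := hXprime
  let R := Localization.AtPrime (Ideal.span ({X} : Set K[X]))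
  let g : K[X] →+* F := Polynomial.eval₂RingHom φ u
  have hg : ∀ z : (Ideal.span ({X} : Set K[X])).primeCompl, IsUnit (g z) := by
    rintro ⟨z, hz⟩
    have hz0 : z ≠ 0 := fun h => hz (h ▸ Ideal.zero_mem _)
    exact (hu z hz0).isUnit
  let f : R →+* F := IsLocalization.lift (M := (Ideal.span ({X} : Set K[X])).primeCompl) hg
  obtain ⟨A, hA, hloc⟩ := IsLocalRing.exists_factor_valuationRing f
  have hfX : f (algebraMap K[X] R X) = u := by
    rw [IsLocalization.lift_eq]
    simp [g]
  have hfC : ∀ a : K, f (algebraMap K[X] R (C a)) = φ a := by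
    intro a
    rw [IsLocalization.lift_eq]
    simp [g]
  refine ⟨A, fun a => (hfC a) ▸ hA _, hfX ▸ hA _, ?_⟩
  intro hunit
  have hXmem : (X : K[X]) ∈ Ideal.span ({X} : Set K[X]) := Ideal.subset_span rfl
  have hnon : ¬ IsUnit (algebraMap K[X] R X) := by
    have := (IsLocalization.AtPrime.to_map_mem_maximal_iff R
      (Ideal.span ({X} : Set K[X])) X).mpr hXmem
    exact fun h => (IsLocalRing.maximalIdeal.isMaximal R).ne_top
      (Ideal.eq_top_of_isUnit_mem _ this h)
  apply hnon
  apply hloc.1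
  convert hunit using 1
  exact Subtype.ext (by simpa using hfX)

/-- Key lemma: if the full system (с+1 bilinear forms) has no nontrivial solution over any
extension field, then for any nontrivial solution of the first `c` forms over an extension,
the `y`-vector is proportional to a `K`-rational vector. -/
lemma y_rational {K : Type u} [Field K] [IsAlgClosed K] {m s c : ℕ}
    (N : Fin (c + 1) → Matrix (Fin m) (Fin s) K)
    (hext : ∀ (F' : Type u) [Field F'] (ψ : K →+* F'),
      ¬ HasSol (fun j => (N j).map ψ))
    (F : Type u) [Field F] (φ : K →+* F)
    (x : Fin m → F) (y : Fin s → F) (hx : x ≠ 0) (hy : y ≠ 0)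
    (hsol : ∀ j : Fin c, ∑ p, ∑ q, φ (N j.castSucc p q) * x p * y q = 0) :
    ∃ η : Fin s → K, η ≠ 0 ∧ ∃ μ : F, μ ≠ 0 ∧ ∀ q, y q = μ * φ (η q) := by
  classical
  obtain ⟨i₀, hi₀⟩ : ∃ i₀, x i₀ ≠ 0 := by
    by_contra h; push_neg at h; exact hx (funext h)
  obtain ⟨q₀, hq₀⟩ : ∃ q₀, y q₀ ≠ 0 := by
    by_contra h; push_neg at h; exact hy (funext h)
  set B : F := ∑ p, ∑ q, φ (N (Fin.last c) p q) * x p * y q with hB_def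
  -- scaled sums
  have scale : ∀ (j : Fin (c + 1)) (a b : F),
      ∑ p, ∑ q, φ (N j p q) * (x p / a) * (y q / b) =
        (∑ p, ∑ q, φ (N j p q) * x p * y q) / (a * b) := by
    intro j a b
    rw [Finset.sum_div]
    refine Finset.sum_congr rfl fun p _ => ?_
    rw [Finset.sum_div]
    refine Finset.sum_congr rfl fun q _ => ?_
    field_simp
    try ring
  by_cases hB : B = 0
  · exfalso
    apply hext F φ
    refine ⟨x, y, hx, hy, fun j => ?_⟩
    induction j using Fin.lastCases with
    | last => simpa [Matrix.map_apply] using hB_def ▸ hB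
    | cast j' => simpa [Matrix.map_apply] using hsol j'
  · -- main claim: normalized values of the last form are K-rational
    have main : ∀ q, y q ≠ 0 → ∃ a : K, φ a = B / (x i₀ * y q) := by
      intro q hq
      set u : F := B / (x i₀ * y q) with hu_def
      by_cases halg : ∃ p : K[X], p ≠ 0 ∧ Polynomial.eval₂ φ u p = 0
      · obtain ⟨p, hp, hpu⟩ := halg
        exact mem_range_of_algebraic φ u p hp hpu
      · exfalso
        push_neg at halg
        obtain ⟨O, hOrange, hOu, hOnonunit⟩ := exists_place φ u (fun p hp => halg p hp)
        set v := O.valuation with hv_def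
        obtain ⟨i₁, -, hi₁⟩ := Finset.exists_max_image Finset.univ (fun p => v (x p))
          ⟨i₀, Finset.mem_univ _⟩
        obtain ⟨q₁, -, hq₁⟩ := Finset.exists_max_image Finset.univ (fun q' => v (y q'))
          ⟨q₀, Finset.mem_univ _⟩
        have hxi₁ : x i₁ ≠ 0 := by
          intro h0
          have h1 := hi₁ i₀ (Finset.mem_univ _)
          rw [h0, map_zero, le_zero_iff] at h1
          exact (v.ne_zero_iff.mpr hi₀) h1
        have hyq₁ : y q₁ ≠ 0 := by
          intro h0
          have h1 := hq₁ q₀ (Finset.mem_univ _)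
          rw [h0, map_zero, le_zero_iff] at h1
          exact (v.ne_zero_iff.mpr hq₀) h1
        have hmema : ∀ p, x p / x i₁ ∈ O := by
          intro p
          apply O.mem_of_valuation_le_one
          rw [v.map_div]
          exact (div_le_one₀ (zero_lt_iff.mpr (v.ne_zero_iff.mpr hxi₁))).mpr
            (hi₁ p (Finset.mem_univ _))
        have hmemb : ∀ q', y q' / y q₁ ∈ O := by
          intro q'
          apply O.mem_of_valuation_le_one
          rw [v.map_div]
          exact (div_le_one₀ (zero_lt_iff.mpr (v.ne_zero_iff.mpr hyq₁))).mpr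
            (hq₁ q' (Finset.mem_univ _))
        -- residue field
        let κ := IsLocalRing.ResidueField O
        let res : O →+* κ := IsLocalRing.residue _
        let φ₂ : K →+* κ := res.comp (φ.codRestrict _ hOrange)
        apply hext κ φ₂
        refine ⟨fun p => res ⟨x p / x i₁, hmema p⟩, fun q' => res ⟨y q' / y q₁, hmemb q'⟩,
          ?_, ?_, ?_⟩
        · intro h
          have h1 := congrFun h i₁
          have he : (⟨x i₁ / x i₁, hmema i₁⟩ : O) = 1 := Subtype.ext (by
            simpa using div_self hxi₁)
          rw [Pi.zero_apply, he, map_one] at h1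
          exact one_ne_zero h1
        · intro h
          have h1 := congrFun h q₁
          have he : (⟨y q₁ / y q₁, hmemb q₁⟩ : O) = 1 := Subtype.ext (by
            simpa using div_self hyq₁)
          rw [Pi.zero_apply, he, map_one] at h1
          exact one_ne_zero h1
        · intro j
          -- rewrite the sum as the residue of a subring element
          have hres : ∑ p, ∑ q', ((N j).map φ₂) p q' * res ⟨x p / x i₁, hmema p⟩ *
              res ⟨y q' / y q₁, hmemb q'⟩ =
              res (∑ p, ∑ q', ⟨φ (N j p q'), hOrange _⟩ * ⟨x p / x i₁, hmema p⟩ *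
                ⟨y q' / y q₁, hmemb q'⟩) := by
            rw [map_sum]
            refine Finset.sum_congr rfl fun p _ => ?_
            rw [map_sum]
            refine Finset.sum_congr rfl fun q' _ => ?_
            rw [map_mul, map_mul]
            rfl
          rw [hres]
          -- the subring element
          set T : O := ∑ p, ∑ q', ⟨φ (N j p q'), hOrange _⟩ *
            ⟨x p / x i₁, hmema p⟩ * ⟨y q' / y q₁, hmemb q'⟩ with hT_def
          have hTval : (T : F) = ∑ p, ∑ q', φ (N j p q') * (x p / x i₁) * (y q' / y q₁) := by
            rw [hT_def]
            push_cast
            rfl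
          induction j using Fin.lastCases with
          | last =>
            have hval : (T : F) = u * ((x i₀ / x i₁) * (y q / y q₁)) := by
              rw [hTval, scale (Fin.last c) (x i₁) (y q₁), ← hB_def, hu_def]
              field_simp
              try ring
            have hTmem : T ∈ IsLocalRing.maximalIdeal O := by
              have : T = ⟨u, hOu⟩ * (⟨x i₀ / x i₁, hmema i₀⟩ * ⟨y q / y q₁, hmemb q⟩) := by
                apply Subtype.ext
                rw [hval]
                push_cast
                rfl
              rw [this]
              exact Ideal.mul_mem_right _ _
                ((IsLocalRing.mem_maximalIdeal _).mpr hOnonunit)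
            exact Ideal.Quotient.eq_zero_iff_mem.mpr hTmem
          | cast j' =>
            have hval : (T : F) = 0 := by
              rw [hTval, scale j'.castSucc (x i₁) (y q₁), hsol j', zero_div]
            have : T = 0 := Subtype.ext (by rw [hval]; rfl)
            rw [this, map_zero]
    -- ratios are K-rational
    obtain ⟨a₀, ha₀⟩ := main q₀ hq₀
    have ha₀ne : a₀ ≠ 0 := by
      intro h
      rw [h, map_zero] at ha₀
      apply hB
      have := ha₀.symm
      field_simp at this
      first
      | exact this
      | simpa using this
    choose aq haq using main
    refine ⟨fun q => if hq : y q = 0 then 0 else a₀ / aq q hq, ?_, y q₀, hq₀, ?_⟩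
    · intro h
      have h1 := congrFun h q₀
      have haqq₀ : aq q₀ hq₀ = a₀ := φ.injective (by rw [haq q₀ hq₀, ha₀])
      rw [Pi.zero_apply, dif_neg hq₀, haqq₀, div_self ha₀ne] at h1
      exact one_ne_zero h1
    · intro q
      by_cases hq : y q = 0
      · simp [hq]
      · have haqne : aq q hq ≠ 0 := by
          intro h
          have := haq q hq
          rw [h, map_zero] at this
          apply hB
          have hden : x i₀ * y q ≠ 0 := mul_ne_zero hi₀ hq
          field_simp at this
          first
          | exact this
          | simpa using this.symm
        -- from φ (aq q) * y q = B / x i₀ = φ a₀ * y q₀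
        have h1 : φ (aq q hq) * y q = B / x i₀ := by
          rw [haq q hq]
          field_simp
        have h2 : φ a₀ * y q₀ = B / x i₀ := by
          rw [ha₀]
          field_simp
        have hφaq : φ (aq q hq) ≠ 0 := fun h0 => haqne (by
          apply φ.injective; rw [h0, map_zero])
        beta_reduce
        rw [dif_neg hq, map_div₀]
        field_simp
        linear_combination h1 - h2

/-- Main combinatorial lemma: any system of at most `m + s - 2` bilinear forms on
`K^m × K^s` over an algebraically closed field has a nontrivial bi-zero. -/
lemma bilin_exists : ∀ (s : ℕ) (K : Type u) [Field K] [IsAlgClosed K] (m c : ℕ),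
    1 ≤ s → 1 ≤ m → c + 2 ≤ m + s → ∀ N : Fin c → Matrix (Fin m) (Fin s) K, HasSol N := by
  intro s
  induction s with
  | zero => intro K _ _ m c hs; omega
  | succ s IH =>
    intro K _ _ m c hs hm hc N
    by_cases hs0 : s = 0
    · -- base case: s + 1 = 1, a system of c ≤ m - 1 linear forms
      subst hs0
      have hcm : c < m := by omega
      classical
      let M : Matrix (Fin c) (Fin m) K := fun j p => N j p 0
      have hninj : ¬ Function.Injective M.mulVecLin := by
        intro hinj
        have := LinearMap.finrank_le_finrank_of_injective hinj
        rw [Module.finrank_fin_fun, Module.finrank_fin_fun] at this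
        omega
      rw [← LinearMap.ker_eq_bot] at hninj
      obtain ⟨x, hxker, hx0⟩ := Submodule.exists_mem_ne_zero_of_ne_bot hninj
      refine ⟨x, fun _ => 1, hx0, ?_, ?_⟩
      · intro h
        exact one_ne_zero (congrFun h 0)
      · intro j
        have h := congrFun (LinearMap.mem_ker.mp hxker) j
        simp only [Matrix.mulVecLin_apply, Matrix.mulVec, Pi.zero_apply,
          dotProduct] at h
        rw [← h]
        refine Finset.sum_congr rfl fun p _ => ?_
        rw [Fin.sum_univ_one]
        simp [M]
    · -- inductive step
      have hs1 : 1 ≤ s := by omega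
      rcases c with _ | c'
      · exact ⟨fun _ => 1, fun _ => 1, fun h => one_ne_zero (congrFun h ⟨0, hm⟩),
          fun h => one_ne_zero (congrFun h 0), fun j => j.elim0⟩
      by_contra hK
      have hext : ∀ (F : Type u) [Field F] (φ : K →+* F),
          ¬ HasSol (fun j => (N j).map φ) := fun F _ φ h => hK (transfer φ N h)
      -- the field with a transcendental element
      let F₁ := AlgebraicClosure (FractionRing (Polynomial K))
      let π : Polynomial K →+* F₁ :=
        (algebraMap (FractionRing (Polynomial K)) F₁).comp
          (algebraMap (Polynomial K) (FractionRing (Polynomial K)))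
      have hπinj : Function.Injective π :=
        (algebraMap (FractionRing (Polynomial K)) F₁).injective.comp
          (IsFractionRing.injective (Polynomial K) (FractionRing (Polynomial K)))
      let φ₁ : K →+* F₁ := π.comp Polynomial.C
      let τ : Fin s → F₁ := fun q => π (Polynomial.X ^ (q.1 + 1))
      -- the sliced system of c' bilinear forms on K^m × K^s
      let N' : Fin c' → Matrix (Fin m) (Fin s) F₁ := fun j p q =>
        φ₁ (N (Fin.castSucc j) p (Fin.castSucc q)) +
          τ q * φ₁ (N (Fin.castSucc j) p (Fin.last s))
      obtain ⟨xh, zh, hxh, hzh, hsolz⟩ := IH F₁ m c' hs1 hm (by omega) N'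
      let yh : Fin (s + 1) → F₁ := Fin.snoc zh (∑ q, τ q * zh q)
      have hyh : yh ≠ 0 := by
        intro h
        apply hzh
        funext q
        have := congrFun h (Fin.castSucc q)
        rwa [show yh (Fin.castSucc q) = zh q from Fin.snoc_castSucc _ _ _] at this
      have hsoly : ∀ j : Fin c',
          ∑ p, ∑ Q, φ₁ (N (Fin.castSucc j) p Q) * xh p * yh Q = 0 := by
        intro j
        rw [← hsolz j]
        refine Finset.sum_congr rfl fun p _ => ?_
        rw [Fin.sum_univ_castSucc]
        have hlast : φ₁ (N (Fin.castSucc j) p (Fin.last s)) * xh p * yh (Fin.last s)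
            = ∑ q, φ₁ (N (Fin.castSucc j) p (Fin.last s)) * xh p * (τ q * zh q) := by
          rw [show yh (Fin.last s) = ∑ q, τ q * zh q from Fin.snoc_last _ _]
          exact Finset.mul_sum _ _ _
        rw [hlast, ← Finset.sum_add_distrib]
        refine Finset.sum_congr rfl fun q _ => ?_
        rw [show yh (Fin.castSucc q) = zh q from Fin.snoc_castSucc _ _ _]
        simp only [N']
        ring
      obtain ⟨η, hη, μ, hμ, hyμ⟩ := y_rational N hext F₁ φ₁ xh yh hxh hyh hsoly
      -- extract the polynomial identity
      have hz_eq : ∀ q : Fin s, zh q = μ * φ₁ (η (Fin.castSucc q)) := by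
        intro q
        have := hyμ (Fin.castSucc q)
        rwa [show yh (Fin.castSucc q) = zh q from Fin.snoc_castSucc _ _ _] at this
      have hlast : (∑ q, τ q * zh q) = μ * φ₁ (η (Fin.last s)) := by
        have := hyμ (Fin.last s)
        rwa [show yh (Fin.last s) = ∑ q, τ q * zh q from Fin.snoc_last _ _] at this
      have h0 : μ * (φ₁ (η (Fin.last s)) - ∑ q, τ q * φ₁ (η (Fin.castSucc q))) = 0 := by
        rw [mul_sub, Finset.mul_sum, ← hlast]
        rw [sub_eq_zero]
        refine Finset.sum_congr rfl fun q _ => ?_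
        rw [hz_eq q]
        ring
      have h1 : φ₁ (η (Fin.last s)) - ∑ q, τ q * φ₁ (η (Fin.castSucc q)) = 0 := by
        rcases mul_eq_zero.mp h0 with h | h
        · exact absurd h hμ
        · exact h
      have hπ0 : π (Polynomial.C (η (Fin.last s)) -
          ∑ q : Fin s, Polynomial.C (η (Fin.castSucc q)) * Polynomial.X ^ (q.1 + 1)) = 0 := by
        rw [map_sub, map_sum, ← h1]
        congr 1
        refine Finset.sum_congr rfl fun q _ => ?_
        rw [map_mul]
        rw [mul_comm]
        rfl
      have hpoly : Polynomial.C (η (Fin.last s)) -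
          ∑ q : Fin s, Polynomial.C (η (Fin.castSucc q)) * Polynomial.X ^ (q.1 + 1) = 0 := by
        apply hπinj
        rw [hπ0, map_zero]
      apply hη
      funext Q
      have hcoeff : ∀ n : ℕ, (Polynomial.C (η (Fin.last s)) -
          ∑ q : Fin s, Polynomial.C (η (Fin.castSucc q)) * Polynomial.X ^ (q.1 + 1)).coeff n
          = 0 := by
        intro n
        rw [hpoly, Polynomial.coeff_zero]
      induction Q using Fin.lastCases with
      | last =>
        have := hcoeff 0
        rw [Polynomial.coeff_sub, Polynomial.coeff_C, Polynomial.finset_sum_coeff] at this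
        simp only [Polynomial.coeff_C_mul_X_pow] at this
        simpa using this
      | cast q₂ =>
        have := hcoeff (q₂.1 + 1)
        rw [Polynomial.coeff_sub, Polynomial.coeff_C, Polynomial.finset_sum_coeff] at this
        simp only [Polynomial.coeff_C_mul_X_pow] at this
        rw [Finset.sum_eq_single q₂] at this
        · simpa using this
        · intro b _ hb
          rw [if_neg]
          intro h
          exact hb (Fin.ext (by omega))
        · intro h
          exact absurd (Finset.mem_univ q₂) h


/-- Lower bound for the dimension of an everywhere-surjective space of linear maps. -/
lemma dim_lower {K B V : Type*} [Field K] [IsAlgClosed K]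
    [AddCommGroup B] [Module K B] [AddCommGroup V] [Module K V]
    [FiniteDimensional K B] [FiniteDimensional K V]
    (hB : 1 ≤ finrank K B) (hV : 1 ≤ finrank K V)
    (W' : Submodule K (B →ₗ[K] V))
    (hsurj : ∀ b : B, b ≠ 0 → ∀ v : V, ∃ f ∈ W', f b = v) :
    finrank K B + finrank K V ≤ finrank K ↥W' + 1 := by
  classical
  by_contra hlt
  push_neg at hlt
  set m := finrank K B with hm_def
  set s := finrank K V with hs_def
  set c := finrank K ↥W' with hc_def
  have hc2 : c + 2 ≤ m + s := by omega
  let bB : Basis (Fin m) K B := finBasis K B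
  let bV : Basis (Fin s) K V := finBasis K V
  let g : Basis (Fin c) K ↥W' := finBasis K ↥W'
  let N : Fin c → Matrix (Fin m) (Fin s) K := fun j p q =>
    bV.coord q (((g j : ↥W') : B →ₗ[K] V) (bB p))
  obtain ⟨x, y, hx, hy, hsol⟩ := bilin_exists s K m c hV hB hc2 N
  let b : B := bB.equivFun.symm x
  have hb : b ≠ 0 := by
    intro h
    exact hx (by simpa [b] using (LinearEquiv.map_eq_zero_iff bB.equivFun.symm).mp h)
  let ψ : V →ₗ[K] K := ∑ q, y q • bV.coord q
  let Φ : ↥W' →ₗ[K] K := ψ ∘ₗ ((LinearMap.applyₗ b) ∘ₗ W'.subtype)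
  have hΦ : Φ = 0 := by
    apply g.ext
    intro j
    have hbx : b = ∑ p, x p • bB p := by
      simp [b, Basis.equivFun_symm_apply]
    show ψ (((g j : ↥W') : B →ₗ[K] V) b) = 0
    rw [hbx, map_sum, map_sum]
    have key : ∀ p, ψ (((g j : ↥W') : B →ₗ[K] V) (x p • bB p)) =
        ∑ q, N j p q * x p * y q := by
      intro p
      rw [map_smul, map_smul, smul_eq_mul]
      simp only [ψ, LinearMap.sum_apply, LinearMap.smul_apply, smul_eq_mul]
      rw [Finset.mul_sum]
      refine Finset.sum_congr rfl fun q _ => ?_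
      simp only [N]
      ring
    rw [Finset.sum_congr rfl fun p _ => key p]
    exact hsol j
  have hψb : ∀ w : ↥W', ψ ((w : B →ₗ[K] V) b) = 0 := by
    intro w
    have := congrArg (fun Ψ => Ψ w) hΦ
    simpa [Φ] using this
  obtain ⟨q₀, hq₀⟩ : ∃ q₀, y q₀ ≠ 0 := by
    by_contra h; push_neg at h; exact hy (funext h)
  have hψne : ψ (bV q₀) ≠ 0 := by
    have : ψ (bV q₀) = y q₀ := by
      simp only [ψ, LinearMap.sum_apply, LinearMap.smul_apply, smul_eq_mul,
        Basis.coord_apply, Basis.repr_self]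
      rw [Finset.sum_eq_single q₀]
      · simp
      · intro b' _ hb'
        simp [Finsupp.single_eq_of_ne' (Ne.symm hb')]
      · intro h; exact absurd (Finset.mem_univ q₀) h
    rw [this]; exact hq₀
  obtain ⟨f, hfW, hfb⟩ := hsurj b hb (bV q₀)
  exact hψne (by rw [← hfb]; exact hψb ⟨f, hfW⟩)


end TechLemma

end TechLemmaAux

/-- The subspace of linear maps vanishing on the subspace `B`. -/
def vanishOn {k U V : Type*} [Field k] [AddCommGroup U] [Module k U]
    [AddCommGroup V] [Module k V] (B : Submodule k U) :
    Submodule k (U →ₗ[k] V) where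
  carrier := {f | ∀ x ∈ B, f x = 0}
  add_mem' := fun hf hg x hx => by simp [hf x hx, hg x hx]
  zero_mem' := fun x _ => by simp
  smul_mem' := fun c f hf x hx => by simp [hf x hx]


/-- Case `A = 0`, `b = 1` of the technical lemma: if `W ⊆ Hom(U,V)` is a `t`-dimensional
subspace such that for every nonzero `u ∈ U` the evaluation `f ↦ f u` maps `W` onto `V`
(`dim U = r`, `dim V = s ≥ 1`), then for any nonzero hyperplane `B ⊂ U` the subspace
`{f ∈ W | f|_B = 0}` has dimension at most `t - r - s + 2`. -/
theorem dim_vanishOn_hyperplane_le {k U V : Type*} [Field k] [IsAlgClosed k]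
    [AddCommGroup U] [Module k U] [AddCommGroup V] [Module k V]
    [FiniteDimensional k U] [FiniteDimensional k V]
    (r s t : ℕ) (hr : 2 ≤ r) (hs : 1 ≤ s)
    (hU : finrank k U = r) (hV : finrank k V = s)
    (W : Submodule k (U →ₗ[k] V)) (hW : finrank k W = t)
    (htrans : ∀ u : U, u ≠ 0 → ∀ v : V, ∃ f ∈ W, f u = v)
    (B : Submodule k U) (hB : B ≠ ⊥) (hBdim : finrank k B = r - 1) :
    (finrank k ↥(W ⊓ vanishOn B) : ℤ) ≤ (t : ℤ) - r - s + 2 := by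
  classical
  -- the restriction map
  let R : ↥W →ₗ[k] (↥B →ₗ[k] V) :=
    { toFun := fun f => (f : U →ₗ[k] V).domRestrict B
      map_add' := by intro f g; ext x; simp
      map_smul' := by intro a f; ext x; simp }
  have hker : LinearMap.ker R = (W ⊓ vanishOn B).comap W.subtype := by
    ext ⟨f, hf⟩
    simp only [LinearMap.mem_ker, Submodule.mem_comap, Submodule.mem_inf]
    constructor
    · intro h
      refine ⟨hf, fun x hx => ?_⟩
      have := congrArg (fun g => g ⟨x, hx⟩) (show R ⟨f, hf⟩ = 0 from h)
      simpa [R] using this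
    · intro ⟨_, h⟩
      ext x
      simpa [R] using h x.1 x.2
  have hkerdim : finrank k ↥(LinearMap.ker R) = finrank k ↥(W ⊓ vanishOn B) := by
    rw [hker]
    exact LinearEquiv.finrank_eq
      (Submodule.comapSubtypeEquivOfLe (inf_le_left : W ⊓ vanishOn B ≤ W))
  -- the range satisfies the surjectivity hypothesis on B
  have hsurj : ∀ b : ↥B, b ≠ 0 → ∀ v : V, ∃ g ∈ LinearMap.range R, g b = v := by
    intro b hb v
    have hbU : (b : U) ≠ 0 := fun h => hb (Subtype.ext h)
    obtain ⟨f, hfW, hfb⟩ := htrans (b : U) hbU v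
    exact ⟨R ⟨f, hfW⟩, LinearMap.mem_range_self _ _, by simpa [R] using hfb⟩
  have hBfin : 1 ≤ finrank k ↥B := by rw [hBdim]; omega
  have hVfin : 1 ≤ finrank k V := by rw [hV]; omega
  have hlow := TechLemma.dim_lower hBfin hVfin (LinearMap.range R) hsurj
  have hrn : finrank k ↥(LinearMap.range R) + finrank k ↥(LinearMap.ker R)
      = finrank k ↥W := LinearMap.finrank_range_add_finrank_ker R
  rw [hW, hkerdim] at hrn
  rw [hBdim, hV] at hlow
  omega
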